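/- arXiv:1503.05851 — 2 statements merged into one kernel-verified Lean document; each statement's English description precedes it below -/
import Mathlib

section
/- If the random variables split into two nonempty groups that are independent of each other (i.e., I = A ∪ B with A, B nonempty, and the families (y_i)_{i∈A} and (y_i)_{i∈B} independent), then the joint cumulant κ[y_I] = 0. -/
open MeasureTheory Finset

/-- The moment `E[y^A]` of the labeled family `(y i)_{i ∈ A}`. -/
noncomputable def mom {Ω : Type*} [MeasurableSpace Ω] {ι : Type*}
    (μ : Measure Ω) (y : ι → Ω → ℝ) (A : Finset ι) : ℝ :=
  ∫ ω, ∏ i ∈ A, y i ω ∂μ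

open scoped Classical in
/-- Set partitions of a finite (label) set `A`: finsets of nonempty pairwise
disjoint blocks whose union is `A`. -/
noncomputable def partitionsOf {ι : Type*} (A : Finset ι) : Finset (Finset (Finset ι)) :=
  A.powerset.powerset.filter fun π =>
    (∀ B ∈ π, B.Nonempty) ∧ (∀ B ∈ π, ∀ C ∈ π, B ≠ C → Disjoint B C) ∧ π.sup id = A

/-- The joint cumulant `κ[y_A]`, defined by the (Möbius-inverted form of the)
moments-to-cumulants recursion. -/
noncomputable def cum {Ω : Type*} [MeasurableSpace Ω] {ι : Type*}
    (μ : Measure Ω) (y : ι → Ω → ℝ) (A : Finset ι) : ℝ :=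
  ∑ π ∈ partitionsOf A,
    (-1 : ℝ) ^ (π.card - 1) * (Nat.factorial (π.card - 1)) * ∏ B ∈ π, mom μ y B

/-- The Wick polynomial `:y^I:` defined by the recursion
`:y^I: = y^I − Σ_{∅≠E⊆I} E[y^E]·:y^{I∖E}:`, with `:y^∅: = 1`. -/
noncomputable def wick {Ω : Type*} [MeasurableSpace Ω] {ι : Type*} [DecidableEq ι]
    (μ : Measure Ω) (y : ι → Ω → ℝ) (I : Finset ι) : Ω → ℝ :=
  fun ω => (∏ i ∈ I, y i ω) -
    ∑ E ∈ (I.powerset.filter fun E => E ≠ ∅).attach,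
      mom μ y E.1 * wick μ y (I \ E.1) ω
termination_by I.card
decreasing_by
  have h := E.2
  simp only [Finset.mem_filter, Finset.mem_powerset] at h
  exact Finset.card_lt_card (Finset.sdiff_ssubset h.1 (Finset.nonempty_iff_ne_empty.mpr h.2))

section AuxComb
variable {ι : Type*} [DecidableEq ι]

lemma mem_partitionsOf {S : Finset ι} {π : Finset (Finset ι)} :
    π ∈ partitionsOf S ↔ (∀ B ∈ π, B.Nonempty) ∧
      (∀ B ∈ π, ∀ C ∈ π, B ≠ C → Disjoint B C) ∧ π.sup id = S := by
  unfold partitionsOf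
  rw [Subsingleton.elim (fun a b : ι => Classical.propDecidable (a = b)) ‹DecidableEq ι›]
  simp only [Finset.mem_filter, Finset.mem_powerset]
  constructor
  · rintro ⟨-, h⟩; exact h
  · rintro ⟨h1, h2, h3⟩
    refine ⟨fun B hB => Finset.mem_powerset.mpr (h3 ▸ Finset.le_sup (f := id) hB), h1, h2, h3⟩

lemma blocks_subset {S : Finset ι} {π : Finset (Finset ι)} (h : π ∈ partitionsOf S)
    {B : Finset ι} (hB : B ∈ π) : B ⊆ S := by
  rw [mem_partitionsOf] at h
  exact h.2.2 ▸ Finset.le_sup (f := id) hB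

lemma singleton_mem_partitionsOf {S : Finset ι} (hS : S.Nonempty) :
    ({S} : Finset (Finset ι)) ∈ partitionsOf S := by
  rw [mem_partitionsOf]
  refine ⟨by simpa using hS, by simp, by simp⟩

lemma eq_singleton_of_card_one {S : Finset ι} {π : Finset (Finset ι)}
    (h : π ∈ partitionsOf S) (hc : π.card = 1) : π = {S} := by
  obtain ⟨B, rfl⟩ := Finset.card_eq_one.mp hc
  rw [mem_partitionsOf] at h
  simpa using h.2.2

lemma partitionsOf_card_pos {S : Finset ι} {π : Finset (Finset ι)}
    (h : π ∈ partitionsOf S) (hS : S.Nonempty) : π.Nonempty := by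
  rw [mem_partitionsOf] at h
  rcases Finset.eq_empty_or_nonempty π with rfl | hne
  · rw [Finset.sup_empty] at h
    exact absurd h.2.2.symm hS.ne_empty
  · exact hne

lemma existsUnique_block {S : Finset ι} {π : Finset (Finset ι)} (h : π ∈ partitionsOf S)
    {a : ι} (ha : a ∈ S) : ∃! B, B ∈ π ∧ a ∈ B := by
  rw [mem_partitionsOf] at h
  obtain ⟨B, hB, haB⟩ := Finset.mem_sup.mp (h.2.2.symm ▸ ha)
  refine ⟨B, ⟨hB, haB⟩, ?_⟩
  rintro C ⟨hC, haC⟩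
  by_contra hne
  exact Finset.disjoint_left.mp (h.2.1 C hC B hB hne) haC haB

lemma card_filter_mem {S : Finset ι} {π : Finset (Finset ι)} (h : π ∈ partitionsOf S)
    {a : ι} (ha : a ∈ S) : (π.filter fun B => a ∈ B).card = 1 := by
  obtain ⟨B, hB, huniq⟩ := existsUnique_block h ha
  rw [Finset.card_eq_one]
  refine ⟨B, ?_⟩
  ext C
  simp only [Finset.mem_filter, Finset.mem_singleton]
  constructor
  · exact fun hC => huniq C hC
  · rintro rfl; exact hB

lemma insert_mem_partitionsOf {S T : Finset ι} {ρ : Finset (Finset ι)}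
    (hTS : T ⊆ S) (hTne : T ≠ S) (hρ : ρ ∈ partitionsOf T) :
    insert (S \ T) ρ ∈ partitionsOf S := by
  classical
  have hR : (S \ T).Nonempty :=
    Finset.sdiff_nonempty.mpr (fun h => hTne (Finset.Subset.antisymm hTS h))
  have hsub : ∀ D ∈ ρ, D ⊆ T := fun D hD => blocks_subset hρ hD
  rw [mem_partitionsOf] at hρ ⊢
  refine ⟨?_, ?_, ?_⟩
  · intro B hB
    rcases Finset.mem_insert.mp hB with rfl | hB
    · exact hR
    · exact hρ.1 B hB
  · intro B hB C hC hne
    rcases Finset.mem_insert.mp hB with rfl | hB <;> rcases Finset.mem_insert.mp hC with rfl | hC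
    · exact absurd rfl hne
    · exact Finset.sdiff_disjoint.mono_right (hsub C hC)
    · exact (Finset.sdiff_disjoint.mono_right (hsub B hB)).symm
    · exact hρ.2.1 B hB C hC hne
  · rw [Finset.sup_insert, hρ.2.2, id]
    rw [Finset.sup_eq_union]
    exact Finset.sdiff_union_of_subset hTS

lemma sdiff_not_mem {S T : Finset ι} {ρ : Finset (Finset ι)}
    (hρ : ρ ∈ partitionsOf T) (hR : (S \ T).Nonempty) : (S \ T) ∉ ρ := by
  intro h
  obtain ⟨x, hx⟩ := hR
  exact (Finset.mem_sdiff.mp hx).2 (blocks_subset hρ h hx)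

lemma erase_mem_partitionsOf {S : Finset ι} {σ : Finset (Finset ι)}
    (hσ : σ ∈ partitionsOf S) {B : Finset ι} (hB : B ∈ σ) :
    σ.erase B ∈ partitionsOf (S \ B) := by
  classical
  have h := mem_partitionsOf.mp hσ
  rw [mem_partitionsOf]
  refine ⟨fun C hC => h.1 C (Finset.mem_of_mem_erase hC),
    fun C hC D hD hne => h.2.1 C (Finset.mem_of_mem_erase hC) D (Finset.mem_of_mem_erase hD) hne,
    ?_⟩
  ext x
  simp only [Finset.mem_sup, Finset.mem_erase, Finset.mem_sdiff, id_eq]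
  constructor
  · rintro ⟨C, ⟨hne, hC⟩, hx⟩
    exact ⟨blocks_subset hσ hC hx,
      fun hxB => Finset.disjoint_left.mp (h.2.1 C hC B hB hne) hx hxB⟩
  · rintro ⟨hxS, hxB⟩
    obtain ⟨C, hC, hx⟩ := Finset.mem_sup.mp (h.2.2.symm ▸ hxS)
    exact ⟨C, ⟨fun hCB => hxB (hCB ▸ hx), hC⟩, hx⟩

lemma lemB (m : Finset ι → ℝ) (hm : m ∅ = 1) (S : Finset ι) (a : ι) (ha : a ∈ S) :
    ∑ T ∈ S.powerset.filter (fun T => a ∈ T),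
      (∑ ρ ∈ partitionsOf T,
        (-1:ℝ)^(ρ.card - 1) * ((ρ.card - 1).factorial : ℝ) * ∏ B ∈ ρ, m B) * m (S \ T)
      = m S := by
  classical
  simp_rw [Finset.sum_mul]
  have key : ∑ T ∈ S.powerset.filter (fun T => a ∈ T), ∑ ρ ∈ partitionsOf T,
      (-1:ℝ)^(ρ.card - 1) * ((ρ.card - 1).factorial : ℝ) * (∏ B ∈ ρ, m B) * m (S \ T)
      = ∑ σ ∈ partitionsOf S,
          ∑ c ∈ insert (none : Option (Finset ι)) ((σ.filter fun B => a ∉ B).image some),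
          (match c with
           | none => (-1:ℝ)^(σ.card - 1) * ((σ.card - 1).factorial : ℝ)
           | some _ => (-1:ℝ)^(σ.card - 2) * ((σ.card - 2).factorial : ℝ)) * ∏ B ∈ σ, m B := by
    rw [Finset.sum_sigma', Finset.sum_sigma']
    refine Finset.sum_nbij'
      (fun x => if h : x.1 = S then ⟨x.2, none⟩ else ⟨insert (S \ x.1) x.2, some (S \ x.1)⟩)
      (fun y => match y with
        | ⟨σ, none⟩ => ⟨S, σ⟩
        | ⟨σ, some B⟩ => ⟨S \ B, σ.erase B⟩) ?_ ?_ ?_ ?_ ?_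
    · rintro ⟨T, ρ⟩ hx
      simp only [Finset.mem_sigma, Finset.mem_filter, Finset.mem_powerset] at hx
      dsimp only
      by_cases hT : T = S
      · subst hT
        rw [dif_pos rfl]
        simp only [Finset.mem_sigma, Finset.mem_insert]
        exact ⟨hx.2, by simp⟩
      · rw [dif_neg hT]
        simp only [Finset.mem_sigma, Finset.mem_insert, Finset.mem_image, Finset.mem_filter]
        refine ⟨insert_mem_partitionsOf hx.1.1 hT hx.2,
          Or.inr ⟨S \ T, ⟨Or.inl rfl,
            fun hmem => (Finset.mem_sdiff.mp hmem).2 hx.1.2⟩, rfl⟩⟩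
    · rintro ⟨σ, c⟩ hy
      simp only [Finset.mem_sigma, Finset.mem_insert, Finset.mem_image,
        Finset.mem_filter] at hy
      rcases c with _ | B
      · simp only [Finset.mem_sigma, Finset.mem_filter, Finset.mem_powerset]
        exact ⟨⟨Finset.Subset.refl S, ha⟩, hy.1⟩
      · obtain ⟨B', ⟨hB'σ, haB'⟩, hBB'⟩ := hy.2.resolve_left (by simp)
        obtain rfl : B' = B := Option.some.inj hBB'
        simp only [Finset.mem_sigma, Finset.mem_filter, Finset.mem_powerset]
        exact ⟨⟨Finset.sdiff_subset, Finset.mem_sdiff.mpr ⟨ha, haB'⟩⟩,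
          erase_mem_partitionsOf hy.1 hB'σ⟩
    · rintro ⟨T, ρ⟩ hx
      simp only [Finset.mem_sigma, Finset.mem_filter, Finset.mem_powerset] at hx
      dsimp only
      by_cases hT : T = S
      · subst hT
        rw [dif_pos rfl]
      · rw [dif_neg hT]
        have hR : (S \ T).Nonempty :=
          Finset.sdiff_nonempty.mpr (fun h => hT (Finset.Subset.antisymm hx.1.1 h))
        dsimp only
        rw [Finset.erase_insert (sdiff_not_mem hx.2 hR), Finset.sdiff_sdiff_eq_self hx.1.1]
    · rintro ⟨σ, c⟩ hy
      simp only [Finset.mem_sigma, Finset.mem_insert, Finset.mem_image,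
        Finset.mem_filter] at hy
      rcases c with _ | B
      · dsimp only
        rw [dif_pos rfl]
      · obtain ⟨B', ⟨hB'σ, haB'⟩, hBB'⟩ := hy.2.resolve_left (by simp)
        obtain rfl : B' = B := Option.some.inj hBB'
        have hBS : B' ⊆ S := blocks_subset hy.1 hB'σ
        have hBne : B'.Nonempty := (mem_partitionsOf.mp hy.1).1 B' hB'σ
        have hT : S \ B' ≠ S := by
          intro h
          obtain ⟨x, hx⟩ := hBne
          have hx' : x ∈ S \ B' := h.symm ▸ hBS hx
          exact (Finset.mem_sdiff.mp hx').2 hx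
        dsimp only
        rw [dif_neg hT, Finset.sdiff_sdiff_eq_self hBS, Finset.insert_erase hB'σ]
    · rintro ⟨T, ρ⟩ hx
      simp only [Finset.mem_sigma, Finset.mem_filter, Finset.mem_powerset] at hx
      dsimp only
      by_cases hT : T = S
      · subst hT
        rw [dif_pos rfl]
        dsimp only
        rw [Finset.sdiff_self, hm, mul_one]
      · rw [dif_neg hT]
        have hR : (S \ T).Nonempty :=
          Finset.sdiff_nonempty.mpr (fun h => hT (Finset.Subset.antisymm hx.1.1 h))
        have hnm : (S \ T) ∉ ρ := sdiff_not_mem hx.2 hR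
        dsimp only
        rw [Finset.prod_insert hnm, Finset.card_insert_of_notMem hnm]
        have he : ρ.card + 1 - 2 = ρ.card - 1 := by omega
        rw [he]
        ring
  rw [key]
  have hinner : ∀ σ ∈ partitionsOf S,
      (∑ c ∈ insert (none : Option (Finset ι)) ((σ.filter fun B => a ∉ B).image some),
        (match c with
         | none => (-1:ℝ)^(σ.card - 1) * ((σ.card - 1).factorial : ℝ)
         | some _ => (-1:ℝ)^(σ.card - 2) * ((σ.card - 2).factorial : ℝ)) * ∏ B ∈ σ, m B)
      = ((-1:ℝ)^(σ.card - 1) * ((σ.card - 1).factorial : ℝ)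
          + ((σ.card - 1 : ℕ) : ℝ) * ((-1:ℝ)^(σ.card - 2) * ((σ.card - 2).factorial : ℝ)))
        * ∏ B ∈ σ, m B := by
    intro σ hσ
    rw [Finset.sum_insert (by simp), Finset.sum_image (fun _ _ _ _ h => Option.some.inj h)]
    have hcard : (σ.filter fun B => a ∉ B).card = σ.card - 1 := by
      have h1 := card_filter_mem hσ ha
      have h2 := Finset.card_filter_add_card_filter_not (s := σ)
        (p := fun B => a ∈ B)
      simp only [h1] at h2
      omega
    dsimp only
    rw [Finset.sum_const, hcard, nsmul_eq_mul]
    ring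
  rw [Finset.sum_congr rfl hinner]
  have hSne : S.Nonempty := ⟨a, ha⟩
  rw [Finset.sum_eq_single_of_mem {S} (singleton_mem_partitionsOf hSne)]
  · simp
  · intro σ hσ hne
    have hpos : σ.Nonempty := partitionsOf_card_pos hσ hSne
    have h2 : 2 ≤ σ.card := by
      have h0 : σ.card ≠ 0 := by simpa [Finset.card_eq_zero] using hpos.ne_empty
      have h1 : σ.card ≠ 1 := fun h => hne (eq_singleton_of_card_one hσ h)
      omega
    obtain ⟨n, hn⟩ : ∃ n, σ.card = n + 2 := ⟨σ.card - 2, by omega⟩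
    rw [hn]
    have e1 : n + 2 - 1 = n + 1 := rfl
    have e2 : n + 2 - 2 = n := rfl
    rw [e1, e2]
    have hpow : ((-1:ℝ))^(n+1) = -(-1:ℝ)^n := by rw [pow_succ]; ring
    rw [hpow, Nat.factorial_succ]
    push_cast
    ring

end AuxComb

/-- if the index set splits into two nonempty independent groups,
the joint cumulant vanishes. -/
theorem cumulant_vanishes_of_indep {Ω : Type*} [MeasurableSpace Ω] {ι : Type*} [DecidableEq ι]
    (μ : Measure Ω) [IsProbabilityMeasure μ] (y : ι → Ω → ℝ)
    (A B : Finset ι) (hA : A.Nonempty) (hB : B.Nonempty) (hAB : Disjoint A B)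
    (hmeas : ∀ i, Measurable (y i))
    (hint : ∀ C ⊆ A ∪ B, Integrable (fun ω => ∏ i ∈ C, y i ω) μ)
    (hindep : ProbabilityTheory.IndepFun
      (fun ω (i : A) => y i.1 ω) (fun ω (i : B) => y i.1 ω) μ) :
    cum μ y (A ∪ B) = 0 := by
  classical
  have hmom_empty : mom μ y ∅ = 1 := by simp [mom]
  -- factorization of moments over the two independent groups
  have hmomfac : ∀ C ⊆ A ∪ B, mom μ y C = mom μ y (C ∩ A) * mom μ y (C ∩ B) := by
    intro C hC
    have hCA : C ∩ A ⊆ A ∪ B := (Finset.inter_subset_left).trans hC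
    have hCB : C ∩ B ⊆ A ∪ B := (Finset.inter_subset_left).trans hC
    set f : Ω → ℝ := fun ω => ∏ i ∈ C ∩ A, y i ω with hf
    set g : Ω → ℝ := fun ω => ∏ i ∈ C ∩ B, y i ω with hg
    have hdisj : Disjoint (C ∩ A) (C ∩ B) :=
      hAB.mono Finset.inter_subset_right Finset.inter_subset_right
    have hsplit : (fun ω => ∏ i ∈ C, y i ω) = f * g := by
      funext ω
      rw [Pi.mul_apply, hf, hg]
      rw [← Finset.prod_union hdisj]
      congr 1
      rw [← Finset.inter_union_distrib_left]
      exact (Finset.inter_eq_left.mpr hC).symm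
    have hFcomp : ∀ (D E : Finset ι), D ⊆ E →
        (fun ω => ∏ i ∈ D, y i ω)
          = (fun v : (↥E → ℝ) => ∏ i ∈ E.attach.filter (fun i => i.1 ∈ D), v i)
            ∘ (fun ω (i : ↥E) => y i.1 ω) := by
      intro D E hDE
      funext ω
      show ∏ i ∈ D, y i ω = ∏ i ∈ E.attach.filter (fun i => i.1 ∈ D), y i.1 ω
      rw [Finset.prod_filter]
      rw [Finset.prod_attach E (fun j => if j ∈ D then y j ω else 1)]
      rw [← Finset.prod_filter]
      congr 1
      ext j
      simp only [Finset.mem_filter]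
      exact ⟨fun h => ⟨hDE h, h⟩, fun h => h.2⟩
    have hFmeas : ∀ (E : Finset ι) (D : Finset ι),
        Measurable (fun v : (↥E → ℝ) => ∏ i ∈ E.attach.filter (fun i => i.1 ∈ D), v i) :=
      fun E D => Finset.measurable_prod _ (fun i _ => measurable_pi_apply i)
    have hIndepfg : ProbabilityTheory.IndepFun f g μ := by
      rw [hf, hg, hFcomp (C ∩ A) A Finset.inter_subset_right,
        hFcomp (C ∩ B) B Finset.inter_subset_right]
      exact hindep.comp (hFmeas A (C ∩ A)) (hFmeas B (C ∩ B))
    have hint_f : Integrable f μ := hint (C ∩ A) hCA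
    have hint_g : Integrable g μ := hint (C ∩ B) hCB
    have := hIndepfg.integral_mul_eq_mul_integral hint_f.aestronglyMeasurable hint_g.aestronglyMeasurable
    calc mom μ y C = ∫ ω, (f * g) ω ∂μ := by rw [mom]; exact congrArg (integral μ) hsplit
    _ = (∫ ω, f ω ∂μ) * ∫ ω, g ω ∂μ := this
    _ = mom μ y (C ∩ A) * mom μ y (C ∩ B) := rfl
  -- the moment-cumulant recursion, from Lemma B
  have hcum : ∀ (S : Finset ι) (a : ι), a ∈ S →
      ∑ T ∈ S.powerset.filter (fun T => a ∈ T), cum μ y T * mom μ y (S \ T)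
        = mom μ y S := by
    intro S a haS
    have h := lemB (mom μ y) hmom_empty S a haS
    simpa only [cum] using h
  -- main induction: mixed cumulants vanish
  have key : ∀ (n : ℕ) (C : Finset ι), C.card ≤ n → C ⊆ A ∪ B →
      (C ∩ A).Nonempty → (C ∩ B).Nonempty → cum μ y C = 0 := by
    intro n
    induction n with
    | zero =>
      intro C hc _ hA' _
      exfalso
      obtain ⟨x, hx⟩ := hA'
      have hxC : x ∈ C := Finset.mem_of_mem_inter_left hx
      have := Finset.card_pos.mpr ⟨x, hxC⟩
      omega
    | succ n ih =>
      intro C hc hsub hA' hB'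
      obtain ⟨a, haCA⟩ := hA'
      have haC : a ∈ C := Finset.mem_of_mem_inter_left haCA
      have haA : a ∈ A := Finset.mem_of_mem_inter_right haCA
      have hrec := hcum C a haC
      have hCmem : C ∈ C.powerset.filter (fun T => a ∈ T) := by
        simp [Finset.mem_filter, Finset.mem_powerset, haC]
      rw [← Finset.add_sum_erase _ _ hCmem, Finset.sdiff_self, hmom_empty, mul_one] at hrec
      have hsum : ∑ T ∈ (C.powerset.filter (fun T => a ∈ T)).erase C,
          cum μ y T * mom μ y (C \ T) = mom μ y C := by
        rw [← Finset.sum_filter_add_sum_filter_not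
          ((C.powerset.filter (fun T => a ∈ T)).erase C) (fun T => T ∩ B = ∅)]
        have hmixed : ∑ T ∈ ((C.powerset.filter (fun T => a ∈ T)).erase C).filter
            (fun T => ¬ T ∩ B = ∅), cum μ y T * mom μ y (C \ T) = 0 := by
          refine Finset.sum_eq_zero (fun T hT => ?_)
          simp only [Finset.mem_filter, Finset.mem_erase, Finset.mem_powerset] at hT
          obtain ⟨⟨hTne, hTC, haT⟩, hTB⟩ := hT
          have hTcard : T.card ≤ n := by
            have hlt : T ⊂ C := ⟨hTC, fun h => hTne (Finset.Subset.antisymm hTC h)⟩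
            have := Finset.card_lt_card hlt
            omega
          have h0 : cum μ y T = 0 := by
            refine ih T hTcard (hTC.trans hsub) ⟨a, Finset.mem_inter.mpr ⟨haT, haA⟩⟩ ?_
            exact Finset.nonempty_iff_ne_empty.mpr hTB
          rw [h0, zero_mul]
        have hset : ((C.powerset.filter (fun T => a ∈ T)).erase C).filter
            (fun T => T ∩ B = ∅) = (C ∩ A).powerset.filter (fun T => a ∈ T) := by
          ext T
          simp only [Finset.mem_filter, Finset.mem_erase, Finset.mem_powerset]
          constructor
          · rintro ⟨⟨hTne, hTC, haT⟩, hTB⟩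
            refine ⟨fun x hx => Finset.mem_inter.mpr ⟨hTC hx, ?_⟩, haT⟩
            rcases Finset.mem_union.mp (hsub (hTC hx)) with h | h
            · exact h
            · exfalso
              have : x ∈ T ∩ B := Finset.mem_inter.mpr ⟨hx, h⟩
              rw [hTB] at this
              exact absurd this (Finset.notMem_empty x)
          · rintro ⟨hTCA, haT⟩
            have hTA : T ⊆ A := hTCA.trans Finset.inter_subset_right
            have hTC : T ⊆ C := hTCA.trans Finset.inter_subset_left
            have hTB : T ∩ B = ∅ := by
              rw [← Finset.disjoint_iff_inter_eq_empty]
              exact hAB.mono_left hTA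
            refine ⟨⟨?_, hTC, haT⟩, hTB⟩
            intro h
            obtain ⟨b, hb⟩ := hB'
            have hbB : b ∈ B := Finset.mem_of_mem_inter_right hb
            have hbC : b ∈ C := Finset.mem_of_mem_inter_left hb
            exact Finset.disjoint_left.mp hAB (hTA (h ▸ hbC)) hbB
        have hpure : ∑ T ∈ (C ∩ A).powerset.filter (fun T => a ∈ T),
            cum μ y T * mom μ y (C \ T) = mom μ y C := by
          have hstep : ∀ T ∈ (C ∩ A).powerset.filter (fun T => a ∈ T),
              cum μ y T * mom μ y (C \ T)
                = (cum μ y T * mom μ y ((C ∩ A) \ T)) * mom μ y (C ∩ B) := by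
            intro T hT
            simp only [Finset.mem_filter, Finset.mem_powerset] at hT
            have hTA : T ⊆ A := hT.1.trans Finset.inter_subset_right
            have h1 : (C \ T) ∩ A = (C ∩ A) \ T := by
              ext x
              simp only [Finset.mem_sdiff, Finset.mem_inter]
              tauto
            have h2 : (C \ T) ∩ B = C ∩ B := by
              ext x
              simp only [Finset.mem_sdiff, Finset.mem_inter]
              constructor
              · rintro ⟨⟨hxC, -⟩, hxB⟩
                exact ⟨hxC, hxB⟩
              · rintro ⟨hxC, hxB⟩
                exact ⟨⟨hxC, fun hxT => Finset.disjoint_left.mp hAB (hTA hxT) hxB⟩, hxB⟩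
            rw [hmomfac (C \ T) ((Finset.sdiff_subset).trans hsub), h1, h2]
            ring
          rw [Finset.sum_congr rfl hstep, ← Finset.sum_mul, hcum (C ∩ A) a haCA]
          exact (hmomfac C hsub).symm
        rw [hset, hpure, hmixed, add_zero]
      rw [hsum] at hrec
      linarith
  refine key (A ∪ B).card (A ∪ B) le_rfl Finset.Subset.rfl ?_ ?_
  · rw [Finset.union_inter_cancel_left]; exact hA
  · rw [Finset.union_inter_cancel_right]; exact hB
end

section
/- Algebraic derivative property: for a nonempty sequence I and any index j, the formal derivative ∂_{y_j} :y^I: = Σ_{k=1}^{|I|} 1(i_k = j) · :y^{I with the k-th entry removed}:, where :y^I: is viewed as a polynomial in the commuting indeterminates (y_j) with coefficients built from the moments. -/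
open MeasureTheory Finset

/-- The moment `E[∏_{l∈A} y_{f(l)}]` of a labeled family of random variables. -/
noncomputable def momL {Ω : Type*} [MeasurableSpace Ω] {ι L : Type*}
    (μ : Measure Ω) (y : ι → Ω → ℝ) (f : L → ι) (A : Finset L) : ℝ :=
  ∫ ω, ∏ l ∈ A, y (f l) ω ∂μ

/-- The Wick polynomial `:y^A:` as a formal polynomial in the commuting
indeterminates `(X i)`, with coefficients built from the moments:
`:y^A: = ∏_{l∈A} X_{f(l)} − Σ_{∅≠E⊆A} E[y^E]·:y^{A∖E}:`. -/
noncomputable def wickPoly {Ω : Type*} [MeasurableSpace Ω] {ι L : Type*} [DecidableEq L]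
    (μ : Measure Ω) (y : ι → Ω → ℝ) (f : L → ι) (A : Finset L) : MvPolynomial ι ℝ :=
  (∏ l ∈ A, MvPolynomial.X (f l)) -
    ∑ E ∈ (A.powerset.filter fun E => E ≠ ∅).attach,
      MvPolynomial.C (momL μ y f E.1) * wickPoly μ y f (A \ E.1)
termination_by A.card
decreasing_by
  have h := E.2
  simp only [Finset.mem_filter, Finset.mem_powerset] at h
  exact Finset.card_lt_card (Finset.sdiff_ssubset h.1 (Finset.nonempty_iff_ne_empty.mpr h.2))

lemma wickPoly_eq {Ω : Type*} [MeasurableSpace Ω] {ι L : Type*} [DecidableEq L]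
    (μ : Measure Ω) (y : ι → Ω → ℝ) (f : L → ι) (A : Finset L) :
    wickPoly μ y f A = (∏ l ∈ A, MvPolynomial.X (f l)) -
      ∑ E ∈ A.powerset.filter fun E => E ≠ ∅,
        MvPolynomial.C (momL μ y f E) * wickPoly μ y f (A \ E) := by
  rw [wickPoly]
  congr 1
  exact Finset.sum_attach _ (fun E => MvPolynomial.C (momL μ y f E) * wickPoly μ y f (A \ E))

lemma pderiv_prod_X {ι L : Type*} [DecidableEq ι] [DecidableEq L]
    (f : L → ι) (j : ι) (A : Finset L) :
    MvPolynomial.pderiv j (∏ l ∈ A, (MvPolynomial.X (f l) : MvPolynomial ι ℝ))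
      = ∑ k ∈ A, if f k = j then ∏ l ∈ A.erase k, (MvPolynomial.X (f l) : MvPolynomial ι ℝ)
          else 0 := by
  induction A using Finset.induction_on with
  | empty => simp
  | insert _ _ ha ih =>
    rename_i a s
    rw [Finset.prod_insert ha, MvPolynomial.pderiv_mul, ih, Finset.sum_insert ha,
      Finset.erase_insert ha]
    rw [Finset.mul_sum]
    congr 1
    · by_cases h : f a = j <;> simp [MvPolynomial.pderiv_X, h, Pi.single_apply]
    · apply Finset.sum_congr rfl
      intro k hk
      have hak : a ≠ k := fun h => ha (h ▸ hk)
      rw [Finset.erase_insert_of_ne hak, Finset.prod_insert (fun h => ha (Finset.mem_of_mem_erase h))]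
      split <;> simp

lemma wick_deriv_aux {Ω : Type*} [MeasurableSpace Ω] {ι L : Type*}
    [DecidableEq ι] [DecidableEq L]
    (μ : Measure Ω) (y : ι → Ω → ℝ) (f : L → ι) (j : ι) (A : Finset L) :
    MvPolynomial.pderiv j (wickPoly μ y f A)
      = ∑ k ∈ A, if f k = j then wickPoly μ y f (A.erase k) else 0 := by
  induction A using Finset.strongInductionOn with
  | _ A IH =>
  rw [wickPoly_eq, map_sub, map_sum, pderiv_prod_X]
  have h1 : ∑ E ∈ A.powerset.filter (fun E => E ≠ ∅),
        MvPolynomial.pderiv j (MvPolynomial.C (momL μ y f E) * wickPoly μ y f (A \ E))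
      = ∑ E ∈ A.powerset.filter (fun E => E ≠ ∅), ∑ k ∈ A \ E,
          if f k = j then MvPolynomial.C (momL μ y f E) * wickPoly μ y f ((A \ E).erase k)
          else 0 := by
    apply Finset.sum_congr rfl
    intro E hE
    simp only [Finset.mem_filter, Finset.mem_powerset] at hE
    have hss : A \ E ⊂ A :=
      Finset.sdiff_ssubset hE.1 (Finset.nonempty_iff_ne_empty.mpr hE.2)
    rw [MvPolynomial.pderiv_C_mul, IH _ hss, Finset.mul_sum]
    exact Finset.sum_congr rfl fun k _ => by split <;> simp
  rw [h1]
  have h2 : ∑ E ∈ A.powerset.filter (fun E => E ≠ ∅), ∑ k ∈ A \ E,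
        (if f k = j then MvPolynomial.C (momL μ y f E) * wickPoly μ y f ((A \ E).erase k)
         else 0)
      = ∑ k ∈ A, ∑ E ∈ (A.erase k).powerset.filter (fun E => E ≠ ∅),
        (if f k = j then MvPolynomial.C (momL μ y f E) * wickPoly μ y f ((A \ E).erase k)
         else 0) := by
    apply Finset.sum_comm'
    intro E k
    simp only [Finset.mem_filter, Finset.mem_powerset, Finset.mem_sdiff,
      Finset.subset_erase, Finset.mem_erase]
    tauto
  rw [h2, ← Finset.sum_sub_distrib]
  apply Finset.sum_congr rfl
  intro k hk
  by_cases h : f k = j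
  · simp only [h, if_true]
    rw [wickPoly_eq]
    congr 1
    apply Finset.sum_congr rfl
    intro E hE
    rw [← Finset.erase_sdiff_comm]
  · simp [h]

open scoped Classical in
/-- the formal (algebraic) derivative of a Wick polynomial:
`∂_{y_j} :y^I: = Σ_{k=1}^{|I|} 1(i_k = j) :y^{I∖(k)}:`. -/
theorem wick_formal_derivative {Ω : Type*} [MeasurableSpace Ω] {ι L : Type*}
    [DecidableEq ι] [DecidableEq L]
    (μ : Measure Ω) [IsProbabilityMeasure μ] (y : ι → Ω → ℝ) (f : L → ι)
    (A : Finset L) (hA : A.Nonempty) (j : ι)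
    (hint : ∀ E ⊆ A, Integrable (fun ω => ∏ l ∈ E, y (f l) ω) μ) :
    MvPolynomial.pderiv j (wickPoly μ y f A)
      = ∑ k ∈ A, if f k = j then wickPoly μ y f (A.erase k) else 0 :=
  wick_deriv_aux μ y f j A
end
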